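/- The word problem of the group ℤ over the generating alphabet {a, a⁻¹} (the set of words over {a, a⁻¹} whose exponent sum is zero) is not a visibly pushdown language for any partition of the two-letter alphabet. -/

import Mathlib

inductive VKind | call | internal | response
deriving DecidableEq

/-- A (nondeterministic) visibly pushdown automaton over alphabet `A`
partitioned by `kind` into call, internal and response letters. -/
structure VPA (A : Type) (kind : A → VKind) where
  Q : Type
  Γ : Type
  [finQ : Fintype Q]
  [finΓ : Fintype Γ]
  init : Q
  accept : Set Q
  /-- transitions on call letters: push one symbol, do not inspect the stack -/
  δc : Q → A → Set (Q × Γ)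
  /-- transitions on internal letters: do not inspect or modify the stack -/
  δi : Q → A → Set Q
  /-- transitions on response letters: pop the topmost stack symbol -/
  δr : Q → A → Γ → Set Q
  /-- transitions on response letters read on the empty stack (bottom symbol) -/
  δb : Q → A → Set Q

namespace VPA

variable {A : Type} {kind : A → VKind}

inductive Steps (M : VPA A kind) : M.Q × List M.Γ → List A → M.Q × List M.Γ → Prop
  | nil (c) : Steps M c [] c
  | call {q s a q' γ w c} : kind a = .call → (q', γ) ∈ M.δc q a →
      Steps M (q', γ :: s) w c → Steps M (q, s) (a :: w) c
  | internal {q s a q' w c} : kind a = .internal → q' ∈ M.δi q a →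
      Steps M (q', s) w c → Steps M (q, s) (a :: w) c
  | pop {q γ s a q' w c} : kind a = .response → q' ∈ M.δr q a γ →
      Steps M (q', s) w c → Steps M (q, γ :: s) (a :: w) c
  | popEmpty {q a q' w c} : kind a = .response → q' ∈ M.δb q a →
      Steps M (q', []) w c → Steps M (q, []) (a :: w) c

/-- A VPA accepts a word if reading it from the initial state with empty stack
can end in an accepting state (with arbitrary stack contents). -/
def Accepts (M : VPA A kind) (w : List A) : Prop :=
  ∃ c : M.Q × List M.Γ, M.Steps (M.init, []) w c ∧ c.1 ∈ M.accept

end VPA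

/-- `L` is a visibly pushdown language over the partition `kind`. -/
def IsVPL {A : Type} (kind : A → VKind) (L : Set (List A)) : Prop :=
  ∃ M : VPA A kind, L = {w | M.Accepts w}

inductive ZA | a | ainv
deriving DecidableEq

namespace VPA

variable {A : Type} {kind : A → VKind}

/-- Abstract (finite-state) single step: ignore the stack completely,
using `δb` for response letters. -/
def step (M : VPA A kind) (x : A) (q q' : M.Q) : Prop :=
  (kind x = .call ∧ ∃ γ, (q', γ) ∈ M.δc q x) ∨
  (kind x = .internal ∧ q' ∈ M.δi q x) ∨
  (kind x = .response ∧ q' ∈ M.δb q x)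

/-- Abstract finite-state run. -/
inductive ARun (M : VPA A kind) : M.Q → List A → M.Q → Prop
  | nil (q) : ARun M q [] q
  | cons {q q' q'' : M.Q} {x : A} {w : List A} :
      M.step x q q' → ARun M q' w q'' → ARun M q (x :: w) q''

def stepSet (M : VPA A kind) (x : A) (S : Set M.Q) : Set M.Q :=
  {q' | ∃ q ∈ S, M.step x q q'}

theorem Steps.append {M : VPA A kind} {c₁ c₂ c₃ : M.Q × List M.Γ} {u v : List A}
    (h1 : M.Steps c₁ u c₂) (h2 : M.Steps c₂ v c₃) : M.Steps c₁ (u ++ v) c₃ := by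
  induction h1 with
  | nil => simpa using h2
  | call hk hm _ ih => exact .call hk hm (ih h2)
  | internal hk hm _ ih => exact .internal hk hm (ih h2)
  | pop hk hm _ ih => exact .pop hk hm (ih h2)
  | popEmpty hk hm _ ih => exact .popEmpty hk hm (ih h2)

theorem steps_append_split {M : VPA A kind} {c₁ c₃ : M.Q × List M.Γ} {u v : List A}
    (h : M.Steps c₁ (u ++ v) c₃) : ∃ c₂, M.Steps c₁ u c₂ ∧ M.Steps c₂ v c₃ := by
  induction u generalizing c₁ with
  | nil => exact ⟨c₁, .nil c₁, h⟩
  | cons x u ih =>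
    cases h with
    | call hk hm hst =>
        obtain ⟨c₂, h1, h2⟩ := ih hst
        exact ⟨c₂, .call hk hm h1, h2⟩
    | internal hk hm hst =>
        obtain ⟨c₂, h1, h2⟩ := ih hst
        exact ⟨c₂, .internal hk hm h1, h2⟩
    | pop hk hm hst =>
        obtain ⟨c₂, h1, h2⟩ := ih hst
        exact ⟨c₂, .pop hk hm h1, h2⟩
    | popEmpty hk hm hst =>
        obtain ⟨c₂, h1, h2⟩ := ih hst
        exact ⟨c₂, .popEmpty hk hm h1, h2⟩

theorem ARun.append {M : VPA A kind} {q q' q'' : M.Q} {u v : List A}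
    (h1 : M.ARun q u q') (h2 : M.ARun q' v q'') : M.ARun q (u ++ v) q'' := by
  induction h1 with
  | nil => simpa using h2
  | cons hs _ ih => exact .cons hs (ih h2)

theorem arun_append_split {M : VPA A kind} {q q'' : M.Q} {u v : List A}
    (h : M.ARun q (u ++ v) q'') : ∃ q', M.ARun q u q' ∧ M.ARun q' v q'' := by
  induction u generalizing q with
  | nil => exact ⟨q, .nil q, h⟩
  | cons x u ih =>
    cases h with
    | cons hs hr =>
        obtain ⟨q', h1, h2⟩ := ih hr
        exact ⟨q', .cons hs h1, h2⟩

theorem noResp_sound {M : VPA A kind} {c₁ c₂ : M.Q × List M.Γ} {w : List A}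
    (h : M.Steps c₁ w c₂) : (∀ x ∈ w, kind x ≠ .response) → M.ARun c₁.1 w c₂.1 := by
  induction h with
  | nil => exact fun _ => .nil _
  | @call q s a q' γ w c hk hm _ ih =>
      intro hw
      exact .cons (Or.inl ⟨hk, γ, hm⟩) (ih fun x hx => hw x (List.mem_cons_of_mem _ hx))
  | internal hk hm _ ih =>
      intro hw
      exact .cons (Or.inr (Or.inl ⟨hk, hm⟩)) (ih fun x hx => hw x (List.mem_cons_of_mem _ hx))
  | pop hk _ _ _ => exact fun hw => absurd hk (hw _ List.mem_cons_self)
  | popEmpty hk _ _ _ => exact fun hw => absurd hk (hw _ List.mem_cons_self)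

theorem noResp_complete {M : VPA A kind} {q q'' : M.Q} {w : List A}
    (h : M.ARun q w q'') (hw : ∀ x ∈ w, kind x ≠ .response) (s : List M.Γ) :
    ∃ s'', M.Steps (q, s) w (q'', s'') := by
  induction h generalizing s with
  | nil => exact ⟨s, .nil _⟩
  | @cons q q' _ x w hs _ ih =>
      have hw' : ∀ y ∈ w, kind y ≠ .response :=
        fun y hy => hw y (List.mem_cons_of_mem _ hy)
      rcases hs with ⟨hk, γ, hm⟩ | ⟨hk, hm⟩ | ⟨hk, _⟩
      · obtain ⟨s'', hst⟩ := ih hw' (γ :: s)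
        exact ⟨s'', .call hk hm hst⟩
      · obtain ⟨s'', hst⟩ := ih hw' s
        exact ⟨s'', .internal hk hm hst⟩
      · exact absurd hk (hw x List.mem_cons_self)

theorem noCall_sound {M : VPA A kind} {c₁ c₂ : M.Q × List M.Γ} {w : List A}
    (h : M.Steps c₁ w c₂) : c₁.2 = [] → (∀ x ∈ w, kind x ≠ .call) →
    M.ARun c₁.1 w c₂.1 ∧ c₂.2 = [] := by
  induction h with
  | nil => exact fun he _ => ⟨.nil _, he⟩
  | call hk _ _ _ => exact fun _ hw => absurd hk (hw _ List.mem_cons_self)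
  | internal hk hm _ ih =>
      intro he hw
      obtain ⟨h1, h2⟩ := ih he fun x hx => hw x (List.mem_cons_of_mem _ hx)
      exact ⟨.cons (Or.inr (Or.inl ⟨hk, hm⟩)) h1, h2⟩
  | pop hk hm hst ih =>
      intro he _
      exact absurd he (by simp)
  | popEmpty hk hm _ ih =>
      intro _ hw
      obtain ⟨h1, h2⟩ := ih rfl fun x hx => hw x (List.mem_cons_of_mem _ hx)
      exact ⟨.cons (Or.inr (Or.inr ⟨hk, hm⟩)) h1, h2⟩

theorem noCall_complete {M : VPA A kind} {q q'' : M.Q} {w : List A}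
    (h : M.ARun q w q'') (hw : ∀ x ∈ w, kind x ≠ .call) :
    M.Steps (q, ([] : List M.Γ)) w (q'', []) := by
  induction h with
  | nil => exact .nil _
  | @cons q q' _ x w hs _ ih =>
      have hw' : ∀ y ∈ w, kind y ≠ .call :=
        fun y hy => hw y (List.mem_cons_of_mem _ hy)
      rcases hs with ⟨hk, _, _⟩ | ⟨hk, hm⟩ | ⟨hk, hm⟩
      · exact absurd hk (hw x List.mem_cons_self)
      · exact .internal hk hm (ih hw')
      · exact .popEmpty hk hm (ih hw')

theorem accepts_iff_arun {M : VPA A kind} {u v : List A}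
    (hu : ∀ x ∈ u, kind x ≠ .call) (hv : ∀ x ∈ v, kind x ≠ .response) :
    M.Accepts (u ++ v) ↔ ∃ q₂ ∈ M.accept, M.ARun M.init (u ++ v) q₂ := by
  constructor
  · rintro ⟨c, hst, hacc⟩
    obtain ⟨c₁, h1, h2⟩ := steps_append_split hst
    obtain ⟨ha1, _⟩ := noCall_sound h1 rfl hu
    exact ⟨c.1, hacc, ha1.append (noResp_sound h2 hv)⟩
  · rintro ⟨q₂, hq, har⟩
    obtain ⟨q₁, h1, h2⟩ := arun_append_split har
    obtain ⟨s'', hs2⟩ := noResp_complete h2 hv []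
    exact ⟨(q₂, s''), (noCall_complete h1 hu).append hs2, hq⟩

theorem mem_iterate_stepSet {M : VPA A kind} (x : A) :
    ∀ (n : ℕ) (S : Set M.Q) (q'' : M.Q),
      q'' ∈ (M.stepSet x)^[n] S ↔ ∃ q ∈ S, M.ARun q (List.replicate n x) q'' := by
  intro n
  induction n with
  | zero =>
      intro S q''
      simp only [Function.iterate_zero, id, List.replicate_zero]
      exact ⟨fun h => ⟨q'', h, .nil _⟩, fun ⟨q, hq, har⟩ => by cases har; exact hq⟩
  | succ n ih =>
      intro S q''
      rw [Function.iterate_succ_apply, ih, List.replicate_succ]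
      constructor
      · rintro ⟨q₁, ⟨q, hq, hst⟩, har⟩
        exact ⟨q, hq, .cons hst har⟩
      · rintro ⟨q, hq, har⟩
        cases har with
        | cons hst har' => exact ⟨_, ⟨q, hq, hst⟩, har'⟩

theorem accepts_rep_iff {M : VPA A kind} {f s : A}
    (hsc : (∀ k ∈ [f, s], kind k ≠ .response) ∨ (∀ k ∈ [f, s], kind k ≠ .call) ∨
      (kind f ≠ .call ∧ kind s ≠ .response)) (N m : ℕ) :
    M.Accepts (List.replicate N f ++ List.replicate m s) ↔
      ∃ q₂ ∈ M.accept, q₂ ∈ (M.stepSet s)^[m] ((M.stepSet f)^[N] {M.init}) := by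
  have hmem : ∀ x, x ∈ List.replicate N f ++ List.replicate m s → x = f ∨ x = s := by
    intro x hx
    rcases List.mem_append.1 hx with h | h
    · exact Or.inl (List.eq_of_mem_replicate h)
    · exact Or.inr (List.eq_of_mem_replicate h)
  have key : M.Accepts (List.replicate N f ++ List.replicate m s) ↔
      ∃ q₂ ∈ M.accept, M.ARun M.init (List.replicate N f ++ List.replicate m s) q₂ := by
    rcases hsc with h | h | ⟨hf, hs⟩
    · have := accepts_iff_arun (M := M) (u := ([] : List A))
        (v := List.replicate N f ++ List.replicate m s)
        (by simp)
        (by intro x hx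
            rcases hmem x hx with rfl | rfl
            · exact h x (by simp)
            · exact h x (by simp))
      simpa using this
    · have := accepts_iff_arun (M := M)
        (u := List.replicate N f ++ List.replicate m s) (v := ([] : List A))
        (by intro x hx
            rcases hmem x hx with rfl | rfl
            · exact h x (by simp)
            · exact h x (by simp))
        (by simp)
      simpa using this
    · exact accepts_iff_arun (M := M)
        (fun x hx => (List.eq_of_mem_replicate hx) ▸ hf)
        (fun x hx => (List.eq_of_mem_replicate hx) ▸ hs)
  rw [key]
  constructor
  · rintro ⟨q₂, hq, har⟩
    obtain ⟨q₁, h1, h2⟩ := arun_append_split har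
    refine ⟨q₂, hq, (mem_iterate_stepSet s m _ q₂).2 ⟨q₁, ?_, h2⟩⟩
    exact (mem_iterate_stepSet f N _ q₁).2 ⟨M.init, rfl, h1⟩
  · rintro ⟨q₂, hq, hmem2⟩
    obtain ⟨q₁, hq₁, h2⟩ := (mem_iterate_stepSet s m _ q₂).1 hmem2
    obtain ⟨q₀, hq₀, h1⟩ := (mem_iterate_stepSet f N _ q₁).1 hq₁
    cases hq₀
    exact ⟨q₂, hq, h1.append h2⟩

end VPA

theorem iterate_stab {X : Type*} (g : X → X) {i j : ℕ} (hij : i ≤ j)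
    (h : g^[i] = g^[j]) : ∀ n, i ≤ n → g^[n] = g^[n + (j - i)] := by
  intro n hn
  have e1 : n - i + i = n := by omega
  have e2 : n - i + j = n + (j - i) := by omega
  calc g^[n] = g^[n - i + i] := by rw [e1]
    _ = g^[n - i] ∘ g^[i] := Function.iterate_add g _ _
    _ = g^[n - i] ∘ g^[j] := by rw [h]
    _ = g^[n + (j - i)] := by rw [← Function.iterate_add, e2]

theorem za_aux (kind : ZA → VKind) (M : VPA ZA kind) (f s : ZA)
    (hfs : (f = ZA.a ∧ s = ZA.ainv) ∨ (f = ZA.ainv ∧ s = ZA.a))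
    (hsc : (∀ k ∈ [f, s], kind k ≠ .response) ∨ (∀ k ∈ [f, s], kind k ≠ .call) ∨
      (kind f ≠ .call ∧ kind s ≠ .response))
    (hM : {w : List ZA | w.count ZA.a = w.count ZA.ainv} = {w | M.Accepts w}) :
    False := by
  haveI := M.finQ
  have hcount : ∀ N m : ℕ,
      (List.replicate N f ++ List.replicate m s) ∈
        {w : List ZA | w.count ZA.a = w.count ZA.ainv} ↔ N = m := by
    intro N m
    rcases hfs with ⟨rfl, rfl⟩ | ⟨rfl, rfl⟩ <;>
      simp [Set.mem_setOf_eq, List.count_append, List.count_replicate] <;>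
      omega
  obtain ⟨i, j, hne, heq⟩ :=
    Finite.exists_ne_map_eq_of_infinite (fun n : ℕ => (M.stepSet s)^[n])
  wlog hij : i < j generalizing i j
  · exact this j i hne.symm heq.symm (by omega)
  have hper : (M.stepSet s)^[j] = (M.stepSet s)^[j + (j - i)] :=
    iterate_stab _ hij.le heq j hij.le
  have hacc1 : M.Accepts (List.replicate j f ++ List.replicate j s) := by
    have : (List.replicate j f ++ List.replicate j s) ∈
        {w : List ZA | w.count ZA.a = w.count ZA.ainv} := (hcount j j).2 rfl
    rw [hM] at this
    exact this
  obtain ⟨q₂, hq, hmem⟩ := (M.accepts_rep_iff hsc j j).1 hacc1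
  have hmem' : q₂ ∈ (M.stepSet s)^[j + (j - i)] ((M.stepSet f)^[j] {M.init}) := by
    rw [← hper]; exact hmem
  have hacc2 : M.Accepts (List.replicate j f ++ List.replicate (j + (j - i)) s) :=
    (M.accepts_rep_iff hsc j (j + (j - i))).2 ⟨q₂, hq, hmem'⟩
  have : (List.replicate j f ++ List.replicate (j + (j - i)) s) ∈
      {w : List ZA | w.count ZA.a = w.count ZA.ainv} := by
    rw [hM]; exact hacc2
  have := (hcount j (j + (j - i))).1 this
  omega

/-- The word problem of ℤ over the generating alphabet {a, a⁻¹}, i.e. the set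
of words with equally many a's as a⁻¹'s, is not a visibly pushdown language
for any partition of the two-letter alphabet. -/
theorem wordProblem_Z_not_VPL :
    ∀ kind : ZA → VKind,
      ¬ IsVPL kind {w : List ZA | w.count ZA.a = w.count ZA.ainv} := by
  rintro kind ⟨M, hM⟩
  by_cases hc : kind ZA.a = VKind.call
  · refine za_aux kind M ZA.ainv ZA.a (Or.inr ⟨rfl, rfl⟩) ?_ hM
    by_cases hc' : kind ZA.ainv = VKind.call
    · refine Or.inl ?_
      intro k hk
      rcases List.mem_pair.1 hk with rfl | rfl
      · rw [hc']; simp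
      · rw [hc]; simp
    · exact Or.inr (Or.inr ⟨hc', by rw [hc]; simp⟩)
  · refine za_aux kind M ZA.a ZA.ainv (Or.inl ⟨rfl, rfl⟩) ?_ hM
    by_cases hr : kind ZA.ainv = VKind.response
    · refine Or.inr (Or.inl ?_)
      intro k hk
      rcases List.mem_pair.1 hk with rfl | rfl
      · exact hc
      · rw [hr]; simp
    · exact Or.inr (Or.inr ⟨hc, hr⟩)
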